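/- Let a < b be real numbers, let p ≥ 1 be an integer, and let h > 0 be such that (b−a)/h is a positive integer. Then there exists a non-constant function u ∈ H¹(a,b) such that for every spline u_{p,h} ∈ S̃_{p,h}(a,b) one has ‖u − u_{p,h}‖_{L²(a,b)} ≥ (1/(4√3)) · h · |u|_{H¹(a,b)}; i.e., the approximation error estimate in S̃_{p,h}(a,b) is sharp up to a constant. -/

import Mathlib

open MeasureTheory Set

/-- The `L²(a,b)` norm of a function. -/
noncomputable def L2 (a b : ℝ) (v : ℝ → ℝ) : ℝ :=
  Real.sqrt (∫ x in Set.Ioo a b, v x ^ 2)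

/-- `u` belongs to the spline space `S_{p,h}(a,b)` of maximum smoothness
(`u` is `(p-1)`-times continuously differentiable on `[a,b]` and coincides with a
polynomial of degree at most `p` on each of the `n = (b-a)/h` subintervals). -/
def IsSplineOn (p n : ℕ) (h a b : ℝ) (u : ℝ → ℝ) : Prop :=
  ContDiffOn ℝ (p - 1 : ℕ) u (Set.Icc a b) ∧
  ∀ j < n, ∃ P : Polynomial ℝ, P.natDegree ≤ p ∧
    ∀ x ∈ Set.Icc (a + j * h) (a + (j + 1) * h), u x = P.eval x

/-- `u ∈ H¹(a,b)` with weak derivative `g`: `u` is absolutely continuous on `[a,b]`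
(an indefinite integral of the locally integrable `g`) and `g` is square-integrable. -/
def IsH1On (a b : ℝ) (u g : ℝ → ℝ) : Prop :=
  IntervalIntegrable g volume a b ∧
  (∀ x ∈ Set.Icc a b, u x = u a + ∫ t in a..x, g t) ∧
  IntegrableOn (fun x => g x ^ 2) (Set.Ioo a b)

/-- The reduced spline space `S̃_{p,h}(a,b)`: splines whose odd derivatives of order
`< p` vanish at both endpoints. -/
def IsReducedSplineOn (p n : ℕ) (h a b : ℝ) (u : ℝ → ℝ) : Prop :=
  IsSplineOn p n h a b u ∧
  ∀ l : ℕ, 2 * l + 1 < p →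
    iteratedDerivWithin (2 * l + 1) u (Set.Icc a b) a = 0 ∧
    iteratedDerivWithin (2 * l + 1) u (Set.Icc a b) b = 0

open MeasureTheory Set
open Polynomial

/-- Coefficient polynomial `B` in the antiderivative of `P(x)·cos(ω(x-a))`. -/
noncomputable def polyB (ω : ℝ) (M : ℕ) (P : ℝ[X]) : ℝ[X] :=
  ∑ i ∈ Finset.range M, C ((-1:ℝ)^i * (ω⁻¹)^(2*i+2)) * derivative^[2*i+1] P

noncomputable def polyA (ω : ℝ) (M : ℕ) (P : ℝ[X]) : ℝ[X] :=
  ∑ i ∈ Finset.range M, C ((-1:ℝ)^i * (ω⁻¹)^(2*i+1)) * derivative^[2*i] P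

lemma polyA_deriv (ω : ℝ) (hω : ω ≠ 0) (M : ℕ) (P : ℝ[X]) :
    derivative (polyA ω M P) = C ω * polyB ω M P := by
  rw [polyA, polyB, derivative_sum, Finset.mul_sum]
  refine Finset.sum_congr rfl fun i _ => ?_
  rw [derivative_C_mul, ← Function.iterate_succ_apply' derivative, ← mul_assoc, ← C_mul]
  congr 2
  field_simp
  ring_nf
  rw [pow_two, ← mul_assoc, mul_inv_cancel₀ hω, one_mul]

lemma polyB_deriv (ω : ℝ) (hω : ω ≠ 0) (M : ℕ) (P : ℝ[X]) (hM : P.natDegree < 2*M) :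
    C ω * polyA ω M P + derivative (polyB ω M P) = P := by
  have key : C ω * polyA ω M P + derivative (polyB ω M P)
      = ∑ i ∈ Finset.range M, (C ((-1:ℝ)^i * (ω⁻¹)^(2*i)) * derivative^[2*i] P
          - C ((-1:ℝ)^(i+1) * (ω⁻¹)^(2*(i+1))) * derivative^[2*(i+1)] P) := by
    rw [polyA, polyB, derivative_sum, Finset.mul_sum, ← Finset.sum_add_distrib]
    refine Finset.sum_congr rfl fun i _ => ?_
    rw [derivative_C_mul, ← Function.iterate_succ_apply' derivative, ← mul_assoc, ← C_mul]
    have h1 : ω * ((-1:ℝ)^i * (ω⁻¹)^(2*i+1)) = (-1:ℝ)^i * (ω⁻¹)^(2*i) := by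
      field_simp; ring_nf; rw [mul_inv_cancel₀ hω, one_mul]
    have h2 : ((-1:ℝ)^i * (ω⁻¹)^(2*i+2)) = -((-1:ℝ)^(i+1) * (ω⁻¹)^(2*(i+1))) := by
      ring_nf
    have h3 : (2 * i + 1).succ = 2*(i+1) := by omega
    rw [h3, h1, h2]
    simp [map_neg]
    ring
  rw [key, Finset.sum_range_sub' (fun i => C ((-1:ℝ)^i * (ω⁻¹)^(2*i)) * derivative^[2*i] P) M]
  have hz : derivative^[2*M] P = 0 := iterate_derivative_eq_zero hM
  simp [hz]

/-- Antiderivative of `x ↦ P(x) cos (ω (x - a))`. -/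
noncomputable def polyF (a ω : ℝ) (M : ℕ) (P : ℝ[X]) (x : ℝ) : ℝ :=
  (polyA ω M P).eval x * Real.sin (ω*(x-a)) + (polyB ω M P).eval x * Real.cos (ω*(x-a))

lemma polyF_hasDerivAt (a ω : ℝ) (hω : ω ≠ 0) (M : ℕ) (P : ℝ[X]) (hM : P.natDegree < 2*M)
    (x : ℝ) : HasDerivAt (polyF a ω M P) (P.eval x * Real.cos (ω*(x-a))) x := by
  have hlin : HasDerivAt (fun y : ℝ => ω*(y-a)) ω x := by
    simpa using ((hasDerivAt_id x).sub_const a).const_mul ω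
  have hsin : HasDerivAt (fun y : ℝ => Real.sin (ω*(y-a)))
      (Real.cos (ω*(x-a)) * ω) x := (Real.hasDerivAt_sin _).comp x hlin
  have hcos : HasDerivAt (fun y : ℝ => Real.cos (ω*(y-a)))
      (-Real.sin (ω*(x-a)) * ω) x := (Real.hasDerivAt_cos _).comp x hlin
  have hA : HasDerivAt (fun y => (polyA ω M P).eval y)
      ((derivative (polyA ω M P)).eval x) x := (polyA ω M P).hasDerivAt x
  have hB : HasDerivAt (fun y => (polyB ω M P).eval y)
      ((derivative (polyB ω M P)).eval x) x := (polyB ω M P).hasDerivAt x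
  have h := (hA.mul hsin).add (hB.mul hcos)
  have e1 : (derivative (polyA ω M P)).eval x = ω * (polyB ω M P).eval x := by
    rw [polyA_deriv ω hω]; simp
  have e2 : ω * (polyA ω M P).eval x + (derivative (polyB ω M P)).eval x = P.eval x := by
    have := polyB_deriv ω hω M P hM
    calc ω * (polyA ω M P).eval x + (derivative (polyB ω M P)).eval x
        = (C ω * polyA ω M P + derivative (polyB ω M P)).eval x := by simp
      _ = P.eval x := by rw [this]
  refine h.congr_deriv ?_
  rw [e1]
  linear_combination (Real.cos (ω*(x-a))) * e2

lemma cell_integral (a ω : ℝ) (hω : ω ≠ 0) (M : ℕ) (P : ℝ[X]) (hM : P.natDegree < 2*M)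
    (c d : ℝ) :
    ∫ x in c..d, P.eval x * Real.cos (ω*(x-a)) = polyF a ω M P d - polyF a ω M P c := by
  refine intervalIntegral.integral_eq_sub_of_hasDerivAt
    (fun x _ => polyF_hasDerivAt a ω hω M P hM x) ?_
  exact (P.continuous_aeval.mul (Real.continuous_cos.comp
    (continuous_const.mul (continuous_id.sub continuous_const)))).intervalIntegrable _ _

lemma spline_iteratedDeriv {a b c d : ℝ} (hab : a < b) (hcd : c < d)
    (hsub : Set.Icc c d ⊆ Set.Icc a b) (N : ℕ) {u : ℝ → ℝ}
    (hu : ContDiffOn ℝ N u (Set.Icc a b)) (P : ℝ[X])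
    (hP : ∀ x ∈ Set.Icc c d, u x = P.eval x) :
    ∀ m, m ≤ N → ∀ x ∈ Set.Icc c d,
      iteratedDerivWithin m u (Set.Icc a b) x = (derivative^[m] P).eval x := by
  intro m
  induction m with
  | zero => intro _ x hx; simpa using hP x hx
  | succ m ih =>
    intro hm x hx
    have hmN : m ≤ N := Nat.le_of_succ_le hm
    have hudiff : UniqueDiffOn ℝ (Set.Icc a b) := uniqueDiffOn_Icc hab
    have hxab : x ∈ Set.Icc a b := hsub hx
    rw [iteratedDerivWithin_succ]
    set v := iteratedDerivWithin m u (Set.Icc a b) with hv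
    have hvdiff : DifferentiableOn ℝ v (Set.Icc a b) :=
      hu.differentiableOn_iteratedDerivWithin (by exact_mod_cast hm) hudiff
    have hd : HasDerivWithinAt v (derivWithin v (Set.Icc a b) x) (Set.Icc a b) x :=
      (hvdiff x hxab).hasDerivWithinAt
    have hd' : HasDerivWithinAt v (derivWithin v (Set.Icc a b) x) (Set.Icc c d) x :=
      hd.mono hsub
    have hagree : ∀ y ∈ Set.Icc c d, (derivative^[m] P).eval y = v y :=
      fun y hy => (ih hmN y hy).symm
    have hQ : HasDerivWithinAt (fun y => (derivative^[m] P).eval y)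
        (derivWithin v (Set.Icc a b) x) (Set.Icc c d) x :=
      hd'.congr hagree (hagree x hx)
    have hQ2 : HasDerivWithinAt (fun y => (derivative^[m] P).eval y)
        ((derivative (derivative^[m] P)).eval x) (Set.Icc c d) x :=
      ((derivative^[m] P).hasDerivAt x).hasDerivWithinAt
    have e1 := hQ.derivWithin (uniqueDiffOn_Icc hcd x hx)
    have e2 := hQ2.derivWithin (uniqueDiffOn_Icc hcd x hx)
    rw [Function.iterate_succ_apply']
    rw [← e1, e2]

lemma ortho (a b h : ℝ) (p n : ℕ) (hab : a < b) (hp : 1 ≤ p) (hh : 0 < h)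
    (hn : 0 < n) (hgrid : b - a = n * h) (s : ℝ → ℝ)
    (hs : IsReducedSplineOn p n h a b s) :
    ∫ x in a..b, s x * Real.cos ((2*Real.pi/h) * (x - a)) = 0 := by
  obtain ⟨⟨hsm, hpoly⟩, hbc⟩ := hs
  set ω : ℝ := 2*Real.pi/h with hωdef
  have hω : ω ≠ 0 := by
    have := Real.pi_pos
    positivity
  set node : ℕ → ℝ := fun j => a + j*h with hnode
  have hnode0 : node 0 = a := by simp [hnode]
  have hnoden : node n = b := by
    simp only [hnode]; linarith [hgrid]
  have hnodelt : ∀ j : ℕ, node j < node (j+1) := by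
    intro j; simp only [hnode]; push_cast; nlinarith
  have hnodemono : Monotone node := monotone_nat_of_le_succ (fun j => (hnodelt j).le)
  have hcellsub : ∀ j : ℕ, j < n → Set.Icc (node j) (node (j+1)) ⊆ Set.Icc a b := by
    intro j hj
    apply Set.Icc_subset_Icc
    · simp [hnode]; positivity
    · rw [← hnoden]; exact hnodemono hj
  -- choose polynomials
  have hpoly' : ∀ j : ℕ, ∃ Q : Polynomial ℝ, j < n →
      Q.natDegree ≤ p ∧ ∀ x ∈ Set.Icc (node j) (node (j+1)), s x = Q.eval x := by
    intro j
    by_cases hj : j < n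
    · obtain ⟨Q, h1, h2⟩ := hpoly j hj
      exact ⟨Q, fun _ => ⟨h1, by simpa [hnode, add_mul] using h2⟩⟩
    · exact ⟨0, fun hj' => absurd hj' hj⟩
  choose P hP using hpoly'
  have hcont : ContinuousOn s (Set.Icc a b) := hsm.continuousOn
  have hcoscont : Continuous fun x : ℝ => Real.cos (ω*(x-a)) :=
    Real.continuous_cos.comp (continuous_const.mul (continuous_id.sub continuous_const))
  have hint : ∀ k < n, IntervalIntegrable (fun x => s x * Real.cos (ω*(x-a)))
      volume (node k) (node (k+1)) := by
    intro k hk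
    rw [intervalIntegrable_iff_integrableOn_Icc_of_le (hnodelt k).le]
    exact ((hcont.mono (hcellsub k hk)).mul hcoscont.continuousOn).integrableOn_compact
      isCompact_Icc
  have hsplit := intervalIntegral.sum_integral_adjacent_intervals (μ := volume) hint
  rw [hnode0, hnoden] at hsplit
  have hωnode : ∀ j : ℕ, ω * (node j - a) = (j : ℝ) * (2*Real.pi) := by
    intro j
    have hh' : h ≠ 0 := ne_of_gt hh
    simp only [hnode]
    rw [hωdef, div_mul_eq_mul_div, show a + (j:ℝ)*h - a = (j:ℝ)*h by ring,
      mul_div_assoc (2*Real.pi) ((j:ℝ)*h) h, mul_div_assoc (j:ℝ) h h,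
      div_self hh', mul_one]
    ring
  have hsinnode : ∀ j : ℕ, Real.sin (ω * (node j - a)) = 0 := by
    intro j
    rw [hωnode j]
    have : (j : ℝ) * (2*Real.pi) = ((2*j : ℕ) : ℝ) * Real.pi := by push_cast; ring
    rw [this, Real.sin_nat_mul_pi]
  have hcosnode : ∀ j : ℕ, Real.cos (ω * (node j - a)) = 1 := by
    intro j; rw [hωnode j]; exact Real.cos_nat_mul_two_pi j
  -- per-cell value
  have hM : ∀ j, j < n → (P j).natDegree < 2*(p+1) := by
    intro j hj; have := (hP j hj).1; omega
  have hcell : ∀ j, j < n → ∫ x in node j..node (j+1), s x * Real.cos (ω*(x-a))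
      = (polyB ω (p+1) (P j)).eval (node (j+1)) - (polyB ω (p+1) (P j)).eval (node j) := by
    intro j hj
    have hcongr : ∫ x in node j..node (j+1), s x * Real.cos (ω*(x-a))
        = ∫ x in node j..node (j+1), (P j).eval x * Real.cos (ω*(x-a)) := by
      apply intervalIntegral.integral_congr
      intro x hx
      rw [Set.uIcc_of_le (hnodelt j).le] at hx
      simp only [(hP j hj).2 x hx]
    rw [hcongr, cell_integral a ω hω (p+1) (P j) (hM j hj)]
    simp [polyF, hsinnode, hcosnode]
  -- total
  rw [← hsplit]
  have : ∀ j ∈ Finset.range n, ∫ x in node j..node (j+1), s x * Real.cos (ω*(x-a))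
      = ∑ i ∈ Finset.range (p+1), ((-1:ℝ)^i * (ω⁻¹)^(2*i+2)) *
          ((Polynomial.derivative^[2*i+1] (P j)).eval (node (j+1))
            - (Polynomial.derivative^[2*i+1] (P j)).eval (node j)) := by
    intro j hj
    rw [hcell j (Finset.mem_range.mp hj)]
    simp only [polyB, Polynomial.eval_finset_sum, Polynomial.eval_mul, Polynomial.eval_C]
    rw [← Finset.sum_sub_distrib]
    exact Finset.sum_congr rfl fun i _ => by ring
  rw [Finset.sum_congr rfl this, Finset.sum_comm]
  apply Finset.sum_eq_zero
  intro i _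
  rw [← Finset.mul_sum]
  rcases lt_or_ge (2*i+1) p with hip | hip
  · -- smooth case: telescoping with boundary conditions
    set m := 2*i+1 with hm
    set G : ℕ → ℝ := fun j => iteratedDerivWithin m s (Set.Icc a b) (node j) with hG
    have hterm : ∀ j ∈ Finset.range n,
        (Polynomial.derivative^[m] (P j)).eval (node (j+1))
          - (Polynomial.derivative^[m] (P j)).eval (node j) = G (j+1) - G j := by
      intro j hj
      have hj' := Finset.mem_range.mp hj
      have hkey := spline_iteratedDeriv hab (hnodelt j) (hcellsub j hj') (p-1) hsm
        (P j) (hP j hj').2 m (by omega)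
      rw [hG]
      rw [← hkey (node (j+1)) (Set.right_mem_Icc.mpr (hnodelt j).le),
          ← hkey (node j) (Set.left_mem_Icc.mpr (hnodelt j).le)]
    rw [Finset.sum_congr rfl hterm, Finset.sum_range_sub G n]
    have hbci := hbc i hip
    simp only [hG, hnode0, hnoden]
    rw [hbci.2, hbci.1]
    simp
  · -- high-order case: constant polynomials
    rw [Finset.sum_eq_zero, mul_zero]
    intro j hj
    have hdeg : (Polynomial.derivative^[2*i+1] (P j)).natDegree ≤ 0 := by
      have h1 := Polynomial.natDegree_iterate_derivative (P j) (2*i+1)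
      have h2 := (hP j (Finset.mem_range.mp hj)).1
      omega
    rw [Polynomial.eq_C_of_natDegree_le_zero hdeg]
    simp


lemma ftc_sin (a ω x : ℝ) :
    ∫ t in a..x, (-ω * Real.sin (ω*(t-a))) = Real.cos (ω*(x-a)) - 1 := by
  have key : ∀ y ∈ Set.uIcc a x, HasDerivAt (fun t => Real.cos (ω*(t-a)))
      (-ω * Real.sin (ω*(y-a))) y := by
    intro y _
    have hlin : HasDerivAt (fun t : ℝ => ω*(t-a)) ω y := by
      simpa using ((hasDerivAt_id y).sub_const a).const_mul ω
    have := (Real.hasDerivAt_cos (ω*(y-a))).comp y hlin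
    exact this.congr_deriv (by ring)
  rw [intervalIntegral.integral_eq_sub_of_hasDerivAt key ?_]
  · simp
  · exact (continuous_const.mul (Real.continuous_sin.comp (continuous_const.mul
      (continuous_id.sub continuous_const)))).intervalIntegrable _ _

lemma integral_cos_sq' (a b ω : ℝ) (hω : ω ≠ 0) :
    ∫ x in a..b, Real.cos (ω*(x-a))^2 = (b-a)/2 + Real.sin (2*(ω*(b-a)))/(4*ω) := by
  have key : ∀ y ∈ Set.uIcc a b, HasDerivAt
      (fun x => (x-a)/2 + Real.sin (2*(ω*(x-a)))/(4*ω))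
      (Real.cos (ω*(y-a))^2) y := by
    intro y _
    have hlin : HasDerivAt (fun t : ℝ => 2*(ω*(t-a))) (2*ω) y := by
      simpa using (((hasDerivAt_id y).sub_const a).const_mul ω).const_mul 2
    have h1 : HasDerivAt (fun t : ℝ => (t-a)/2) (1/2) y := by
      simpa using ((hasDerivAt_id y).sub_const a).div_const 2
    have h2 := ((Real.hasDerivAt_sin (2*(ω*(y-a)))).comp y hlin).div_const (4*ω)
    have := h1.add h2
    refine this.congr_deriv ?_
    rw [Real.cos_sq]
    field_simp
    ring
  rw [intervalIntegral.integral_eq_sub_of_hasDerivAt key ?_]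
  · simp
  · exact ((Real.continuous_cos.comp (continuous_const.mul
      (continuous_id.sub continuous_const))).pow 2).intervalIntegrable _ _

lemma integral_sin_sq' (a b ω : ℝ) (hω : ω ≠ 0) :
    ∫ x in a..b, Real.sin (ω*(x-a))^2 = (b-a)/2 - Real.sin (2*(ω*(b-a)))/(4*ω) := by
  have key : ∀ y ∈ Set.uIcc a b, HasDerivAt
      (fun x => (x-a)/2 - Real.sin (2*(ω*(x-a)))/(4*ω))
      (Real.sin (ω*(y-a))^2) y := by
    intro y _
    have hlin : HasDerivAt (fun t : ℝ => 2*(ω*(t-a))) (2*ω) y := by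
      simpa using (((hasDerivAt_id y).sub_const a).const_mul ω).const_mul 2
    have h1 : HasDerivAt (fun t : ℝ => (t-a)/2) (1/2) y := by
      simpa using ((hasDerivAt_id y).sub_const a).div_const 2
    have h2 := ((Real.hasDerivAt_sin (2*(ω*(y-a)))).comp y hlin).div_const (4*ω)
    have := h1.sub h2
    refine this.congr_deriv ?_
    have := Real.sin_sq (ω*(y-a))
    rw [this, Real.cos_sq]
    field_simp
    ring
  rw [intervalIntegral.integral_eq_sub_of_hasDerivAt key ?_]
  · simp
  · exact ((Real.continuous_sin.comp (continuous_const.mul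
      (continuous_id.sub continuous_const))).pow 2).intervalIntegrable _ _


theorem approximation_estimate_sharp (a b h : ℝ) (p n : ℕ)
    (hab : a < b) (hp : 1 ≤ p) (hh : 0 < h) (hn : 0 < n) (hgrid : b - a = n * h) :
    ∃ u g : ℝ → ℝ, IsH1On a b u g ∧
      (¬ ∃ c : ℝ, ∀ x ∈ Set.Icc a b, u x = c) ∧
      ∀ s : ℝ → ℝ, IsReducedSplineOn p n h a b s →
        (1 / (4 * Real.sqrt 3)) * h * L2 a b g ≤ L2 a b (fun x => u x - s x) := by
  have hh' : h ≠ 0 := ne_of_gt hh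
  have hπ := Real.pi_pos
  set ω : ℝ := 2*Real.pi/h with hωdef
  have hωpos : 0 < ω := by positivity
  have hω : ω ≠ 0 := ne_of_gt hωpos
  set u : ℝ → ℝ := fun x => Real.cos (ω*(x-a)) with hu
  set g : ℝ → ℝ := fun x => -ω * Real.sin (ω*(x-a)) with hg
  have hucont : Continuous u :=
    Real.continuous_cos.comp (continuous_const.mul (continuous_id.sub continuous_const))
  have hgcont : Continuous g :=
    continuous_const.mul (Real.continuous_sin.comp
      (continuous_const.mul (continuous_id.sub continuous_const)))
  have hua : u a = 1 := by simp [hu]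
  refine ⟨u, g, ⟨hgcont.intervalIntegrable a b, ?_, ?_⟩, ?_, ?_⟩
  · intro x _
    rw [hua, hg, ftc_sin a ω x]
    simp [hu]
  · exact ((hgcont.pow 2).continuousOn.integrableOn_compact isCompact_Icc).mono_set
      Set.Ioo_subset_Icc_self
  · rintro ⟨c, hc⟩
    have h1 : c = 1 := by rw [← hua]; exact (hc a (Set.left_mem_Icc.mpr hab.le)).symm
    have hmem : a + h/2 ∈ Set.Icc a b := by
      constructor
      · linarith
      · have hn1 : (1:ℝ) ≤ (n:ℝ) := by exact_mod_cast hn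
        nlinarith
    have h2 : u (a + h/2) = -1 := by
      have : ω * (a + h/2 - a) = Real.pi := by
        rw [hωdef]; field_simp; ring
      rw [hu]; simp only [this]; exact Real.cos_pi
    rw [hc _ hmem, h1] at h2
    norm_num at h2
  · intro s hs
    have hscont : ContinuousOn s (Set.Icc a b) := hs.1.1.continuousOn
    have hIntus : IntegrableOn (fun x => u x * s x) (Set.Ioo a b) volume :=
      ((hucont.continuousOn.mul hscont).integrableOn_compact isCompact_Icc).mono_set
        Set.Ioo_subset_Icc_self
    have hIntu2 : IntegrableOn (fun x => u x ^ 2) (Set.Ioo a b) volume :=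
      (((hucont.pow 2).continuousOn).integrableOn_compact isCompact_Icc).mono_set
        Set.Ioo_subset_Icc_self
    have hInts2 : IntegrableOn (fun x => s x ^ 2) (Set.Ioo a b) volume :=
      ((hscont.pow 2).integrableOn_compact isCompact_Icc).mono_set
        Set.Ioo_subset_Icc_self
    -- orthogonality
    have hortho := ortho a b h p n hab hp hh hn hgrid s hs
    have hus : ∫ x in Set.Ioo a b, u x * s x = 0 := by
      rw [← MeasureTheory.integral_Ioc_eq_integral_Ioo,
        ← intervalIntegral.integral_of_le hab.le]
      rw [← hortho]
      apply intervalIntegral.integral_congr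
      intro x _
      show u x * s x = s x * Real.cos (2 * Real.pi / h * (x - a))
      rw [hu, hωdef]
      ring
    -- value of ∫ u²
    have hsin4 : Real.sin (2*(ω*(b-a))) = 0 := by
      have : 2*(ω*(b-a)) = ((2*n : ℕ) : ℝ) * (2*Real.pi) := by
        rw [hωdef, hgrid]; push_cast; field_simp
      rw [this]
      have : ((2*n : ℕ) : ℝ) * (2*Real.pi) = ((4*n : ℕ) : ℝ) * Real.pi := by push_cast; ring
      rw [this, Real.sin_nat_mul_pi]
    have hu2 : ∫ x in Set.Ioo a b, u x ^ 2 = (b-a)/2 := by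
      rw [← MeasureTheory.integral_Ioc_eq_integral_Ioo,
        ← intervalIntegral.integral_of_le hab.le]
      rw [hu]
      simp only []
      rw [integral_cos_sq' a b ω hω, hsin4]
      ring
    have hg2 : ∫ x in Set.Ioo a b, g x ^ 2 = ω^2 * ((b-a)/2) := by
      rw [← MeasureTheory.integral_Ioc_eq_integral_Ioo,
        ← intervalIntegral.integral_of_le hab.le]
      have : ∀ x, g x ^ 2 = ω^2 * Real.sin (ω*(x-a))^2 := by
        intro x; rw [hg]; ring
      simp only [this]
      rw [intervalIntegral.integral_const_mul, integral_sin_sq' a b ω hω, hsin4]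
      ring
    -- expansion
    have hexp : ∫ x in Set.Ioo a b, (u x - s x)^2
        = (∫ x in Set.Ioo a b, u x ^ 2) - 2 * (∫ x in Set.Ioo a b, u x * s x)
          + ∫ x in Set.Ioo a b, s x ^ 2 := by
      have hpt : ∀ x, (u x - s x)^2 = (u x ^ 2 - 2*(u x * s x)) + s x ^ 2 := fun x => by ring
      have hInt3 : IntegrableOn (fun x => 2*(u x * s x)) (Set.Ioo a b) volume :=
        hIntus.const_mul 2
      have hInt12 : IntegrableOn (fun x => u x ^ 2 - 2*(u x * s x)) (Set.Ioo a b) volume :=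
        hIntu2.sub hInt3
      simp only [hpt]
      rw [MeasureTheory.integral_add hInt12 hInts2,
        MeasureTheory.integral_sub hIntu2 hInt3,
        MeasureTheory.integral_const_mul 2]
    have hs2nonneg : 0 ≤ ∫ x in Set.Ioo a b, s x ^ 2 :=
      MeasureTheory.integral_nonneg fun x => sq_nonneg _
    have hI : (b-a)/2 ≤ ∫ x in Set.Ioo a b, (u x - s x)^2 := by
      rw [hexp, hu2, hus]; linarith
    -- final numeric estimate
    rw [L2, L2, hg2]
    have hX : (0:ℝ) ≤ (b-a)/2 := by linarith
    rw [Real.sqrt_mul (sq_nonneg ω), Real.sqrt_sq hωpos.le]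
    have hsqrt3 : (1.7:ℝ) ≤ Real.sqrt 3 :=
      (Real.le_sqrt (by norm_num) (by norm_num)).mpr (by norm_num)
    have hsqrt3pos : (0:ℝ) < Real.sqrt 3 := by linarith
    have hfac : 1 / (4 * Real.sqrt 3) * h * ω ≤ 1 := by
      have hhω : h * ω = 2*Real.pi := by rw [hωdef]; field_simp
      rw [mul_assoc, hhω]
      rw [div_mul_eq_mul_div, one_mul, div_le_one (by positivity)]
      nlinarith [Real.pi_lt_d2]
    calc 1 / (4 * Real.sqrt 3) * h * (ω * Real.sqrt ((b-a)/2))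
        = (1 / (4 * Real.sqrt 3) * h * ω) * Real.sqrt ((b-a)/2) := by ring
      _ ≤ 1 * Real.sqrt ((b-a)/2) :=
          mul_le_mul_of_nonneg_right hfac (Real.sqrt_nonneg _)
      _ = Real.sqrt ((b-a)/2) := one_mul _
      _ ≤ Real.sqrt (∫ x in Set.Ioo a b, (u x - s x)^2) := Real.sqrt_le_sqrt hI
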